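/- (Per-step estimate (5) of Theorem 3.1 for the GBGS method.) Suppose x_k = x_{k-1} + I_{J_{k-1}} A_{J_{k-1}}† (b − A x_{k-1}), where J_{k-1} is the greedy index set determined by θ ∈ [0,1] and r_{k-1} = b − A x_{k-1} (with Aᵀr_{k-1} ≠ 0), and that J_{k-1} is a proper subset of {1,…,n}. Suppose further Aᵀ(b − A x_k) ≠ 0, let J_k be the greedy index set determined by θ and r_k = b − A x_k, and let x_{k+1} = x_k + I_{J_k} A_{J_k}† (b − A x_k). Then ‖x_{k+1} − x⋆‖²_{AᵀA} ≤ (1 − (‖A_{J_k}‖_F² / σ_max(A_{J_k})²) · (θ·‖A‖_F²/(‖A‖_F² − ‖A_{J_{k-1}}‖_F²) + (1−θ)) · σ_min(A)² / ‖A‖_F²) · ‖x_k − x⋆‖²_{AᵀA}. -/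

import Mathlib

noncomputable section
open Matrix

/-- Squared Euclidean norm `‖v‖₂²` of a vector. -/
def norm2 {ι : Type*} [Fintype ι] (v : ι → ℝ) : ℝ := ∑ i, (v i) ^ 2

/-- Squared Frobenius norm `‖A‖_F²` of a matrix. -/
def frob2 {ι κ : Type*} [Fintype ι] [Fintype κ] (A : Matrix ι κ ℝ) : ℝ :=
  ∑ i, ∑ j, (A i j) ^ 2

/-- Squared largest singular value `σ_max(B)²`, i.e. the largest eigenvalue of `Bᵀ * B`. -/
def sigmaMaxSq {ι κ : Type*} [Fintype ι] [Fintype κ] [DecidableEq κ]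
    (B : Matrix ι κ ℝ) : ℝ :=
  sSup (Set.range (show (Bᵀ * B).IsHermitian by
    have h := Matrix.isHermitian_conjTranspose_mul_self B
    rwa [Matrix.conjTranspose_eq_transpose_of_trivial] at h).eigenvalues)

/-- Squared smallest singular value `σ_min(B)²`, i.e. the smallest eigenvalue of `Bᵀ * B`. -/
def sigmaMinSq {ι κ : Type*} [Fintype ι] [Fintype κ] [DecidableEq κ]
    (B : Matrix ι κ ℝ) : ℝ :=
  sInf (Set.range (show (Bᵀ * B).IsHermitian by
    have h := Matrix.isHermitian_conjTranspose_mul_self B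
    rwa [Matrix.conjTranspose_eq_transpose_of_trivial] at h).eigenvalues)

/-- Squared Euclidean norm `‖A_(j)‖₂²` of the `j`-th column of `A`. -/
def col2 {m n : ℕ} (A : Matrix (Fin m) (Fin n) ℝ) (j : Fin n) : ℝ := ∑ i, (A i j) ^ 2

/-- `A` has full column rank: its columns are linearly independent. -/
def FullColRank {m n : ℕ} (A : Matrix (Fin m) (Fin n) ℝ) : Prop :=
  LinearIndependent ℝ fun j : Fin n => (fun i => A i j : Fin m → ℝ)

/-- `max_{1 ≤ j ≤ n} |A_(j)ᵀ r|² / ‖A_(j)‖₂²`. -/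
def maxRatio {m n : ℕ} (A : Matrix (Fin m) (Fin n) ℝ) (r : Fin m → ℝ) : ℝ :=
  ⨆ j : Fin n, ((Aᵀ *ᵥ r) j) ^ 2 / col2 A j

/-- The greedy parameter
`ε = (θ/‖Aᵀr‖₂²)·max_j |A_(j)ᵀ r|²/‖A_(j)‖₂² + (1−θ)/‖A‖_F²`. -/
def eps {m n : ℕ} (A : Matrix (Fin m) (Fin n) ℝ) (r : Fin m → ℝ) (θ : ℝ) : ℝ :=
  θ / norm2 (Aᵀ *ᵥ r) * maxRatio A r + (1 - θ) / frob2 A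

open Classical in
/-- The greedy index set `J = { j : |A_(j)ᵀ r|² ≥ ε ‖Aᵀr‖₂² ‖A_(j)‖₂² }`. -/
def greedySet {m n : ℕ} (A : Matrix (Fin m) (Fin n) ℝ) (r : Fin m → ℝ) (θ : ℝ) :
    Finset (Fin n) :=
  Finset.univ.filter fun j =>
    eps A r θ * norm2 (Aᵀ *ᵥ r) * col2 A j ≤ ((Aᵀ *ᵥ r) j) ^ 2

/-- The column submatrix `A_J` of `A`, with columns indexed by `J`. -/
def subCols {m n : ℕ} (A : Matrix (Fin m) (Fin n) ℝ) (J : Finset (Fin n)) :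
    Matrix (Fin m) {j // j ∈ J} ℝ :=
  A.submatrix id fun j => (j : Fin n)

/-- The submatrix `I_J` of the `n × n` identity with columns indexed by `J`. -/
def subId {n : ℕ} (J : Finset (Fin n)) : Matrix (Fin n) {j // j ∈ J} ℝ :=
  (1 : Matrix (Fin n) (Fin n) ℝ).submatrix id fun j => (j : Fin n)

/-- Moore–Penrose pseudoinverse of a full-column-rank matrix: `B† = (BᵀB)⁻¹Bᵀ`. -/
def pinv {ι κ : Type*} [Fintype ι] [Fintype κ] [DecidableEq κ] (B : Matrix ι κ ℝ) :
    Matrix κ ι ℝ :=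
  (Bᵀ * B)⁻¹ * Bᵀ

/-- The matrix `Ã_J` whose columns are the normalized columns `A_(j)/‖A_(j)‖₂`, `j ∈ J`. -/
def tildeA {m n : ℕ} (A : Matrix (Fin m) (Fin n) ℝ) (J : Finset (Fin n)) :
    Matrix (Fin m) {j // j ∈ J} ℝ :=
  Matrix.of fun i j => A i (j : Fin n) / Real.sqrt (col2 A (j : Fin n))

/-- The matrix `Ĩ_J` whose columns are `e_j/‖A_(j)‖₂`, `j ∈ J`. -/
def tildeI {m n : ℕ} (A : Matrix (Fin m) (Fin n) ℝ) (J : Finset (Fin n)) :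
    Matrix (Fin n) {j // j ∈ J} ℝ :=
  Matrix.of fun i j => (if i = (j : Fin n) then 1 else 0) / Real.sqrt (col2 A (j : Fin n))

section Toolkit
variable {κ : Type*} [Fintype κ] [DecidableEq κ]

lemma conj_quad {M : Matrix κ κ ℝ} (hM : M.IsHermitian) (d : κ → ℝ) (v : κ → ℝ) :
    v ⬝ᵥ (((hM.eigenvectorUnitary : Matrix κ κ ℝ) * diagonal d *
      star (hM.eigenvectorUnitary : Matrix κ κ ℝ)) *ᵥ v)
      = ∑ i, d i * ((star (hM.eigenvectorUnitary : Matrix κ κ ℝ) *ᵥ v) i) ^ 2 := by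
  set U : Matrix κ κ ℝ := (hM.eigenvectorUnitary : Matrix κ κ ℝ)
  set w : κ → ℝ := star U *ᵥ v with hw
  have hsU : star U = Uᵀ := by
    rw [Matrix.star_eq_conjTranspose, conjTranspose_eq_transpose_of_trivial]
  have h1 : v ⬝ᵥ ((U * diagonal d * star U) *ᵥ v)
      = w ⬝ᵥ (diagonal d *ᵥ w) := by
    rw [← mulVec_mulVec, ← mulVec_mulVec, Matrix.dotProduct_mulVec, hw, hsU,
      ← Matrix.mulVec_transpose]
  rw [h1, Matrix.dotProduct_mulVec]
  simp only [Matrix.vecMul_diagonal, dotProduct]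
  exact Finset.sum_congr rfl fun i _ => by ring

lemma spectral_real {M : Matrix κ κ ℝ} (hM : M.IsHermitian) :
    M = (hM.eigenvectorUnitary : Matrix κ κ ℝ) * diagonal hM.eigenvalues *
      star (hM.eigenvectorUnitary : Matrix κ κ ℝ) := by
  have := hM.spectral_theorem
  simpa using this

lemma UstarU {M : Matrix κ κ ℝ} (hM : M.IsHermitian) :
    star (hM.eigenvectorUnitary : Matrix κ κ ℝ) *
      (hM.eigenvectorUnitary : Matrix κ κ ℝ) = 1 :=
  Unitary.coe_star_mul_self _

lemma quad_eq {M : Matrix κ κ ℝ} (hM : M.IsHermitian) (v : κ → ℝ) :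
    v ⬝ᵥ (M *ᵥ v) = ∑ i, hM.eigenvalues i *
      ((star (hM.eigenvectorUnitary : Matrix κ κ ℝ) *ᵥ v) i) ^ 2 := by
  conv_lhs => rw [spectral_real hM]
  exact conj_quad hM _ v

lemma norm2_w_eq {M : Matrix κ κ ℝ} (hM : M.IsHermitian) (v : κ → ℝ) :
    ∑ i, ((star (hM.eigenvectorUnitary : Matrix κ κ ℝ) *ᵥ v) i) ^ 2 = ∑ i, v i ^ 2 := by
  have h := conj_quad hM (fun _ => (1:ℝ)) v
  have h2 : (hM.eigenvectorUnitary : Matrix κ κ ℝ) * diagonal (fun _ => (1:ℝ)) *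
      star (hM.eigenvectorUnitary : Matrix κ κ ℝ) = 1 := by
    rw [Matrix.diagonal_one, Matrix.mul_one]
    exact Unitary.coe_mul_star_self _
  rw [h2] at h
  simp only [one_mulVec, one_mul] at h
  rw [← h]
  simp [dotProduct, sq]

lemma sq_quad {M : Matrix κ κ ℝ} (hM : M.IsHermitian) (v : κ → ℝ) :
    v ⬝ᵥ ((M * M) *ᵥ v) = ∑ i, (hM.eigenvalues i) ^ 2 *
      ((star (hM.eigenvectorUnitary : Matrix κ κ ℝ) *ᵥ v) i) ^ 2 := by
  have hMM : M * M = (hM.eigenvectorUnitary : Matrix κ κ ℝ) *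
      diagonal (fun i => hM.eigenvalues i ^ 2) *
      star (hM.eigenvectorUnitary : Matrix κ κ ℝ) := by
    conv_lhs => rw [spectral_real hM]
    rw [show ∀ (X Y Z W V : Matrix κ κ ℝ), X * Y * Z * (X * W * V) = X * Y * (Z * X) * W * V
      from fun _ _ _ _ _ => by noncomm_ring, UstarU hM, Matrix.mul_one,
      Matrix.mul_assoc _ (diagonal _) (diagonal _), Matrix.diagonal_mul_diagonal]
    congr 2
    funext i
    ring
  rw [hMM]
  exact conj_quad hM _ v

lemma inv_spectral {M : Matrix κ κ ℝ} (hM : M.IsHermitian)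
    (h0 : ∀ i, hM.eigenvalues i ≠ 0) :
    M⁻¹ = (hM.eigenvectorUnitary : Matrix κ κ ℝ) *
      diagonal (fun i => (hM.eigenvalues i)⁻¹) *
      star (hM.eigenvectorUnitary : Matrix κ κ ℝ) := by
  apply Matrix.inv_eq_left_inv
  have key : ((hM.eigenvectorUnitary : Matrix κ κ ℝ) *
      diagonal (fun i => (hM.eigenvalues i)⁻¹) *
      star (hM.eigenvectorUnitary : Matrix κ κ ℝ)) *
      ((hM.eigenvectorUnitary : Matrix κ κ ℝ) * diagonal hM.eigenvalues *
      star (hM.eigenvectorUnitary : Matrix κ κ ℝ)) = 1 := by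
    rw [show ∀ (X Y Z W V : Matrix κ κ ℝ), X * Y * Z * (X * W * V) = X * Y * (Z * X) * W * V
      from fun _ _ _ _ _ => by noncomm_ring, UstarU hM, Matrix.mul_one,
      Matrix.mul_assoc _ (diagonal _) (diagonal _), Matrix.diagonal_mul_diagonal]
    have : (fun i => (hM.eigenvalues i)⁻¹ * hM.eigenvalues i) = fun _ => (1:ℝ) := by
      funext i; exact inv_mul_cancel₀ (h0 i)
    rw [this, Matrix.diagonal_one, Matrix.mul_one]
    exact Unitary.coe_mul_star_self _
  rw [← spectral_real hM] at key
  exact key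

lemma inv_quad {M : Matrix κ κ ℝ} (hM : M.IsHermitian)
    (h0 : ∀ i, hM.eigenvalues i ≠ 0) (v : κ → ℝ) :
    v ⬝ᵥ (M⁻¹ *ᵥ v) = ∑ i, (hM.eigenvalues i)⁻¹ *
      ((star (hM.eigenvectorUnitary : Matrix κ κ ℝ) *ᵥ v) i) ^ 2 := by
  rw [inv_spectral hM h0]
  exact conj_quad hM _ v

lemma dotProduct_self_le_sSup_mul_inv_quad [Nonempty κ] {M : Matrix κ κ ℝ}
    (hM : M.PosDef) (v : κ → ℝ) :
    v ⬝ᵥ v ≤ sSup (Set.range hM.1.eigenvalues) * (v ⬝ᵥ (M⁻¹ *ᵥ v)) := by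
  have h0 : ∀ i, hM.1.eigenvalues i ≠ 0 := fun i => (hM.eigenvalues_pos i).ne'
  rw [inv_quad hM.1 h0 v, Finset.mul_sum]
  have hv : v ⬝ᵥ v =
      ∑ i, ((star (hM.1.eigenvectorUnitary : Matrix κ κ ℝ) *ᵥ v) i) ^ 2 := by
    rw [norm2_w_eq hM.1 v]; simp [dotProduct, sq]
  rw [hv]
  apply Finset.sum_le_sum
  intro i _
  have hμ := hM.eigenvalues_pos i
  have hle : hM.1.eigenvalues i ≤ sSup (Set.range hM.1.eigenvalues) :=
    le_csSup (Set.finite_range _).bddAbove ⟨i, rfl⟩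
  have h1 : (1:ℝ) ≤ sSup (Set.range hM.1.eigenvalues) * (hM.1.eigenvalues i)⁻¹ := by
    rw [← div_eq_mul_inv, le_div_iff₀ hμ, one_mul]
    exact hle
  nlinarith [sq_nonneg ((star (hM.1.eigenvectorUnitary : Matrix κ κ ℝ) *ᵥ v) i)]

lemma sInf_mul_quad_le_sq_quad {M : Matrix κ κ ℝ} (hM : M.PosSemidef) (v : κ → ℝ) :
    sInf (Set.range hM.1.eigenvalues) * (v ⬝ᵥ (M *ᵥ v)) ≤ v ⬝ᵥ ((M * M) *ᵥ v) := by
  rw [quad_eq hM.1 v, sq_quad hM.1 v, Finset.mul_sum]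
  apply Finset.sum_le_sum
  intro i _
  have hμ : 0 ≤ hM.1.eigenvalues i := hM.eigenvalues_nonneg i
  have hle : sInf (Set.range hM.1.eigenvalues) ≤ hM.1.eigenvalues i :=
    csInf_le (Set.finite_range _).bddBelow ⟨i, rfl⟩
  nlinarith [mul_le_mul_of_nonneg_right hle hμ,
    sq_nonneg ((star (hM.1.eigenvectorUnitary : Matrix κ κ ℝ) *ᵥ v) i),
    mul_le_mul_of_nonneg_right (mul_le_mul_of_nonneg_right hle hμ)
      (sq_nonneg ((star (hM.1.eigenvectorUnitary : Matrix κ κ ℝ) *ᵥ v) i))]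

end Toolkit

section App
variable {m n : ℕ}

lemma mul_subId (A : Matrix (Fin m) (Fin n) ℝ) (J : Finset (Fin n)) :
    A * subId J = subCols A J := by
  ext i j'
  simp [subId, subCols, Matrix.mul_apply, Matrix.one_apply]

lemma A_mulVec_subId (A : Matrix (Fin m) (Fin n) ℝ) (J : Finset (Fin n)) (y : {j // j ∈ J} → ℝ) :
    A *ᵥ (subId J *ᵥ y) = subCols A J *ᵥ y := by
  rw [Matrix.mulVec_mulVec, mul_subId]

lemma subColsT_mulVec (A : Matrix (Fin m) (Fin n) ℝ) (J : Finset (Fin n)) (w : Fin m → ℝ) :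
    (subCols A J)ᵀ *ᵥ w = fun j' : {j // j ∈ J} => (Aᵀ *ᵥ w) (j' : Fin n) := by
  funext j'
  simp [subCols, Matrix.mulVec, Matrix.transpose, dotProduct]

lemma norm2_eq_dot {ι : Type*} [Fintype ι] (v : ι → ℝ) : norm2 v = v ⬝ᵥ v := by
  simp [norm2, dotProduct, sq]

lemma cols_li {A : Matrix (Fin m) (Fin n) ℝ} (hA : FullColRank A) (J : Finset (Fin n)) :
    LinearIndependent ℝ (fun j' : {j // j ∈ J} => ((subCols A J)ᵀ j')) := by
  have : (fun j' : {j // j ∈ J} => ((subCols A J)ᵀ j'))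
      = (fun j : Fin n => (fun i => A i j : Fin m → ℝ)) ∘ (fun j' : {j // j ∈ J} => (j' : Fin n)) := by
    funext j'; funext i; rfl
  rw [this]
  exact hA.comp _ Subtype.val_injective

lemma gram_posdef {A : Matrix (Fin m) (Fin n) ℝ} (hA : FullColRank A) (J : Finset (Fin n)) :
    ((subCols A J)ᵀ * subCols A J).PosDef := by
  set B := subCols A J
  refine Matrix.PosDef.of_dotProduct_mulVec_pos (by
    have h := Matrix.isHermitian_conjTranspose_mul_self B
    rwa [Matrix.conjTranspose_eq_transpose_of_trivial] at h) fun x hx => ?_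
  have hinj : Function.Injective B.mulVec := Matrix.mulVec_injective_iff.2 (cols_li hA J)
  have hBx : B *ᵥ x ≠ 0 := by
    intro h
    exact hx (hinj (by simpa using h))
  have h1 : star x ⬝ᵥ ((Bᵀ * B) *ᵥ x) = (B *ᵥ x) ⬝ᵥ (B *ᵥ x) := by
    rw [star_trivial, ← Matrix.mulVec_mulVec, Matrix.dotProduct_mulVec, Matrix.vecMul_transpose]
  rw [h1]
  obtain ⟨i, hi⟩ := Function.ne_iff.1 hBx
  have : (0:ℝ) < ∑ i, (B *ᵥ x) i * (B *ᵥ x) i := by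
    apply Finset.sum_pos' (fun i _ => mul_self_nonneg _)
    exact ⟨i, Finset.mem_univ i, mul_self_pos.2 (by simpa using hi)⟩
  simpa [dotProduct] using this

lemma step_lemma {A : Matrix (Fin m) (Fin n) ℝ} (hA : FullColRank A)
    (b : Fin m → ℝ) (xstar : Fin n → ℝ) (hstar : (Aᵀ * A) *ᵥ xstar = Aᵀ *ᵥ b)
    (x : Fin n → ℝ) (J : Finset (Fin n))
    (x' : Fin n → ℝ)
    (hx' : x' = x + subId J *ᵥ (pinv (subCols A J) *ᵥ (b - A *ᵥ x))) :
    (subCols A J)ᵀ *ᵥ (b - A *ᵥ x') = 0 ∧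
    norm2 (A *ᵥ (x' - xstar)) = norm2 (A *ᵥ (x - xstar)) -
      ((subCols A J)ᵀ *ᵥ (b - A *ᵥ x)) ⬝ᵥ
        (((subCols A J)ᵀ * subCols A J)⁻¹ *ᵥ ((subCols A J)ᵀ *ᵥ (b - A *ᵥ x))) := by
  set B := subCols A J with hB
  set G := Bᵀ * B with hG
  set r : Fin m → ℝ := b - A *ᵥ x with hr
  set g : {j // j ∈ J} → ℝ := Bᵀ *ᵥ r with hg
  set z : {j // j ∈ J} → ℝ := G⁻¹ *ᵥ g with hz
  have hGdet : IsUnit G.det := (Matrix.isUnit_iff_isUnit_det G).1 (gram_posdef hA J).isUnit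
  have hGz : G *ᵥ z = g := by
    rw [hz, Matrix.mulVec_mulVec, Matrix.mul_nonsing_inv _ hGdet, Matrix.one_mulVec]
  have hpinv : pinv B *ᵥ r = z := by
    rw [pinv, ← Matrix.mulVec_mulVec, hz, hg, hG]
  have hAx' : A *ᵥ x' = A *ᵥ x + B *ᵥ z := by
    rw [hx', Matrix.mulVec_add, A_mulVec_subId, hpinv]
  have hres : b - A *ᵥ x' = r - B *ᵥ z := by
    rw [hAx', hr, sub_add_eq_sub_sub]
  have horth : Bᵀ *ᵥ (b - A *ᵥ x') = 0 := by
    rw [hres, Matrix.mulVec_sub, Matrix.mulVec_mulVec, ← hG, hGz, ← hg, sub_self]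
  refine ⟨horth, ?_⟩
  set p : Fin m → ℝ := A *ᵥ (x - xstar) with hp
  have hAe' : A *ᵥ (x' - xstar) = p + B *ᵥ z := by
    rw [hx', add_sub_right_comm, Matrix.mulVec_add, A_mulVec_subId, hpinv, hp]
  have hATA : Aᵀ *ᵥ p = -(Aᵀ *ᵥ r) := by
    rw [hp, hr, Matrix.mulVec_sub, Matrix.mulVec_sub, Matrix.mulVec_sub,
      Matrix.mulVec_mulVec, Matrix.mulVec_mulVec, hstar]
    abel
  have hBp : Bᵀ *ᵥ p = -g := by
    rw [hB, subColsT_mulVec, hg, hB, subColsT_mulVec]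
    funext j'
    rw [hATA]
    simp
  have hq : (B *ᵥ z) ⬝ᵥ (B *ᵥ z) = g ⬝ᵥ z := by
    rw [Matrix.dotProduct_mulVec, ← Matrix.mulVec_transpose, Matrix.mulVec_mulVec, ← hG, hGz]
  have hpq : p ⬝ᵥ (B *ᵥ z) = -(g ⬝ᵥ z) := by
    rw [Matrix.dotProduct_mulVec, ← Matrix.mulVec_transpose, hBp, neg_dotProduct]
  have hqp : (B *ᵥ z) ⬝ᵥ p = -(g ⬝ᵥ z) := by rw [dotProduct_comm, hpq]
  rw [hAe', norm2_eq_dot, norm2_eq_dot, dotProduct_add, add_dotProduct, add_dotProduct,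
    hq, hpq, hqp]
  ring

lemma norm2_nonneg {ι : Type*} [Fintype ι] (v : ι → ℝ) : 0 ≤ norm2 v :=
  Finset.sum_nonneg fun i _ => sq_nonneg _

lemma norm2_pos {ι : Type*} [Fintype ι] {v : ι → ℝ} (hv : v ≠ 0) : 0 < norm2 v := by
  obtain ⟨i, hi⟩ := Function.ne_iff.1 hv
  refine Finset.sum_pos' (fun i _ => sq_nonneg _)
    ⟨i, Finset.mem_univ i, lt_of_le_of_ne (sq_nonneg _) (Ne.symm (pow_ne_zero 2 (by simpa using hi)))⟩

lemma col2_pos {A : Matrix (Fin m) (Fin n) ℝ} (hA : FullColRank A) (j : Fin n) :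
    0 < col2 A j := by
  have hne : (fun i => A i j : Fin m → ℝ) ≠ 0 := hA.ne_zero j
  exact norm2_pos hne

lemma frob2_eq_sum_col2 (A : Matrix (Fin m) (Fin n) ℝ) : frob2 A = ∑ j, col2 A j := by
  rw [frob2, Finset.sum_comm]; rfl

lemma frob2_subCols (A : Matrix (Fin m) (Fin n) ℝ) (J : Finset (Fin n)) :
    frob2 (subCols A J) = ∑ j ∈ J, col2 A j := by
  rw [frob2, Finset.sum_comm]
  rw [← Finset.sum_coe_sort J (fun j => col2 A j)]
  rfl

lemma norm2_subColsT (A : Matrix (Fin m) (Fin n) ℝ) (J : Finset (Fin n)) (w : Fin m → ℝ) :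
    norm2 ((subCols A J)ᵀ *ᵥ w) = ∑ j ∈ J, ((Aᵀ *ᵥ w) j) ^ 2 := by
  rw [subColsT_mulVec, ← Finset.sum_coe_sort J (fun j => ((Aᵀ *ᵥ w) j) ^ 2)]
  rfl

lemma sq_le_maxRatio_mul {A : Matrix (Fin m) (Fin n) ℝ} (hA : FullColRank A)
    (r : Fin m → ℝ) (j : Fin n) :
    ((Aᵀ *ᵥ r) j) ^ 2 ≤ maxRatio A r * col2 A j := by
  have hc := col2_pos hA j
  have h1 : ((Aᵀ *ᵥ r) j) ^ 2 / col2 A j ≤ maxRatio A r :=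
    le_ciSup (f := fun j => ((Aᵀ *ᵥ r) j) ^ 2 / col2 A j) (Set.finite_range _).bddAbove j
  calc ((Aᵀ *ᵥ r) j) ^ 2 = ((Aᵀ *ᵥ r) j) ^ 2 / col2 A j * col2 A j := by
        field_simp
    _ ≤ maxRatio A r * col2 A j := mul_le_mul_of_nonneg_right h1 hc.le

lemma norm2_ATr_le {A : Matrix (Fin m) (Fin n) ℝ} (hA : FullColRank A) (r : Fin m → ℝ) :
    norm2 (Aᵀ *ᵥ r) ≤ maxRatio A r * frob2 A := by
  rw [frob2_eq_sum_col2, Finset.mul_sum, norm2]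
  exact Finset.sum_le_sum fun j _ => sq_le_maxRatio_mul hA r j

lemma norm2_ATr_le_of_orth {A : Matrix (Fin m) (Fin n) ℝ} (hA : FullColRank A)
    (r : Fin m → ℝ) (J : Finset (Fin n)) (horth : ∀ j ∈ J, (Aᵀ *ᵥ r) j = 0) :
    norm2 (Aᵀ *ᵥ r) ≤ maxRatio A r * (frob2 A - frob2 (subCols A J)) := by
  have hsplit : frob2 A - frob2 (subCols A J) = ∑ j ∈ Jᶜ, col2 A j := by
    rw [frob2_eq_sum_col2, frob2_subCols, ← Finset.sum_add_sum_compl J (col2 A)]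
    ring
  rw [hsplit, Finset.mul_sum, norm2]
  have hzero : ∀ j ∈ J, ((Aᵀ *ᵥ r) j) ^ 2 = 0 := fun j hj => by rw [horth j hj]; ring
  rw [← Finset.sum_add_sum_compl J (fun j => ((Aᵀ *ᵥ r) j) ^ 2),
    Finset.sum_eq_zero hzero, zero_add]
  exact Finset.sum_le_sum fun j _ => sq_le_maxRatio_mul hA r j

lemma greedySet_nonempty {A : Matrix (Fin m) (Fin n) ℝ} (hA : FullColRank A)
    {r : Fin m → ℝ} (hr : Aᵀ *ᵥ r ≠ 0) {θ : ℝ} (hθ : θ ∈ Set.Icc (0:ℝ) 1) :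
    (greedySet A r θ).Nonempty := by
  have hn : Nonempty (Fin n) := by
    by_contra h
    exact hr (funext fun j => absurd ⟨j⟩ h)
  have hN : 0 < norm2 (Aᵀ *ᵥ r) := norm2_pos hr
  have hF : 0 < frob2 A := by
    rw [frob2_eq_sum_col2]
    exact Finset.sum_pos (fun j _ => col2_pos hA j) Finset.univ_nonempty
  obtain ⟨j0, -, hj0⟩ := Finset.exists_max_image Finset.univ
    (fun j => ((Aᵀ *ᵥ r) j) ^ 2 / col2 A j) Finset.univ_nonempty
  have hRj0 : maxRatio A r = ((Aᵀ *ᵥ r) j0) ^ 2 / col2 A j0 := by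
    refine le_antisymm (ciSup_le fun j => hj0 j (Finset.mem_univ j)) ?_
    exact le_ciSup (f := fun j => ((Aᵀ *ᵥ r) j) ^ 2 / col2 A j) (Set.finite_range _).bddAbove j0
  have hc := col2_pos hA j0
  have hNR : norm2 (Aᵀ *ᵥ r) / frob2 A ≤ maxRatio A r := by
    rw [div_le_iff₀ hF]
    exact norm2_ATr_le hA r
  have hεN : eps A r θ * norm2 (Aᵀ *ᵥ r) ≤ maxRatio A r := by
    rw [eps]
    have heq : (θ / norm2 (Aᵀ *ᵥ r) * maxRatio A r + (1 - θ) / frob2 A) * norm2 (Aᵀ *ᵥ r)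
        = θ * maxRatio A r + (1 - θ) * (norm2 (Aᵀ *ᵥ r) / frob2 A) := by
      field_simp
    rw [heq]
    nlinarith [mul_le_mul_of_nonneg_left hNR (sub_nonneg.2 hθ.2)]
  have hcond : eps A r θ * norm2 (Aᵀ *ᵥ r) * col2 A j0 ≤ ((Aᵀ *ᵥ r) j0) ^ 2 := by
    have h2 : maxRatio A r * col2 A j0 = ((Aᵀ *ᵥ r) j0) ^ 2 := by
      rw [hRj0, div_mul_cancel₀ _ hc.ne']
    calc eps A r θ * norm2 (Aᵀ *ᵥ r) * col2 A j0 ≤ maxRatio A r * col2 A j0 :=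
          mul_le_mul_of_nonneg_right hεN hc.le
      _ = _ := h2
  refine ⟨j0, ?_⟩
  rw [greedySet, Finset.mem_filter]
  exact ⟨Finset.mem_univ _, hcond⟩

lemma greedy_sum_bound (A : Matrix (Fin m) (Fin n) ℝ) (r : Fin m → ℝ) (θ : ℝ) :
    eps A r θ * norm2 (Aᵀ *ᵥ r) * frob2 (subCols A (greedySet A r θ)) ≤
      norm2 ((subCols A (greedySet A r θ))ᵀ *ᵥ r) := by
  rw [norm2_subColsT, frob2_subCols, Finset.mul_sum]
  apply Finset.sum_le_sum
  intro j hj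
  rw [greedySet, Finset.mem_filter] at hj
  exact hj.2

lemma sigmaMaxSq_pos {A : Matrix (Fin m) (Fin n) ℝ} (hA : FullColRank A)
    {J : Finset (Fin n)} (hJ : J.Nonempty) : 0 < sigmaMaxSq (subCols A J) := by
  obtain ⟨j0, hj0⟩ := hJ
  have hpd := gram_posdef hA J
  have h1 := hpd.eigenvalues_pos ⟨j0, hj0⟩
  have h2 : hpd.1.eigenvalues ⟨j0, hj0⟩ ≤ sigmaMaxSq (subCols A J) :=
    le_csSup (Set.finite_range _).bddAbove ⟨⟨j0, hj0⟩, rfl⟩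
  exact h1.trans_le h2

lemma posSemidef_ATA (A : Matrix (Fin m) (Fin n) ℝ) : (Aᵀ * A).PosSemidef := by
  have := Matrix.posSemidef_conjTranspose_mul_self A
  rwa [Matrix.conjTranspose_eq_transpose_of_trivial] at this

lemma sigmaMinSq_nonneg (A : Matrix (Fin m) (Fin n) ℝ) (hn : Nonempty (Fin n)) :
    0 ≤ sigmaMinSq A := by
  refine le_csInf (Set.range_nonempty _) ?_
  rintro b ⟨i, rfl⟩
  exact (posSemidef_ATA A).eigenvalues_nonneg i

lemma energy_lower (A : Matrix (Fin m) (Fin n) ℝ) (u : Fin n → ℝ) :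
    sigmaMinSq A * norm2 (A *ᵥ u) ≤ norm2 (Aᵀ *ᵥ (A *ᵥ u)) := by
  have hM := posSemidef_ATA A
  have h := sInf_mul_quad_le_sq_quad hM u
  have h1 : norm2 (A *ᵥ u) = u ⬝ᵥ ((Aᵀ * A) *ᵥ u) := by
    rw [norm2_eq_dot, ← Matrix.mulVec_mulVec, Matrix.dotProduct_mulVec,
      ← Matrix.mulVec_transpose, dotProduct_comm]
  have h2 : norm2 (Aᵀ *ᵥ (A *ᵥ u)) = u ⬝ᵥ (((Aᵀ * A) * (Aᵀ * A)) *ᵥ u) := by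
    rw [norm2_eq_dot, Matrix.mulVec_mulVec, Matrix.dotProduct_mulVec,
      ← Matrix.mulVec_transpose, Matrix.transpose_mul, Matrix.transpose_transpose,
      Matrix.mulVec_mulVec, dotProduct_comm]
  rw [h1, h2]
  exact h

lemma gram_Q_lower {A : Matrix (Fin m) (Fin n) ℝ} (hA : FullColRank A)
    {J : Finset (Fin n)} (hJ : J.Nonempty) (r : Fin m → ℝ) :
    norm2 ((subCols A J)ᵀ *ᵥ r) ≤ sigmaMaxSq (subCols A J) *
      (((subCols A J)ᵀ *ᵥ r) ⬝ᵥ (((subCols A J)ᵀ * subCols A J)⁻¹ *ᵥ ((subCols A J)ᵀ *ᵥ r))) := by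
  have : Nonempty {j // j ∈ J} := ⟨⟨hJ.choose, hJ.choose_spec⟩⟩
  have h := dotProduct_self_le_sSup_mul_inv_quad (gram_posdef hA J) ((subCols A J)ᵀ *ᵥ r)
  rw [norm2_eq_dot]
  exact h

end App

/-- per-step estimate (5) of Theorem 3.1, GBGS method: if `x_k` was
produced by a GBGS step with greedy set `J_{k-1} ⊊ {1,…,n}`, and `x_{k+1}` is the
next GBGS iterate with greedy set `J_k`, then
`‖x_{k+1} − x⋆‖²_{AᵀA} ≤ (1 − (‖A_{J_k}‖_F²/σ_max(A_{J_k})²)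
  (θ‖A‖_F²/(‖A‖_F² − ‖A_{J_{k-1}}‖_F²) + (1−θ)) σ_min(A)²/‖A‖_F²) ‖x_k − x⋆‖²_{AᵀA}`. -/
theorem stmt8 {m n : ℕ} (A : Matrix (Fin m) (Fin n) ℝ) (hA : FullColRank A)
    (b : Fin m → ℝ) (xstar : Fin n → ℝ) (hstar : (Aᵀ * A) *ᵥ xstar = Aᵀ *ᵥ b)
    (θ : ℝ) (hθ : θ ∈ Set.Icc (0 : ℝ) 1)
    (xprev : Fin n → ℝ) (rprev : Fin m → ℝ) (hrprev : rprev = b - A *ᵥ xprev)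
    (hrprev0 : Aᵀ *ᵥ rprev ≠ 0)
    (Jprev : Finset (Fin n)) (hJprev : Jprev = greedySet A rprev θ)
    (hproper : Jprev ≠ Finset.univ)
    (xk : Fin n → ℝ)
    (hxk : xk = xprev + subId Jprev *ᵥ (pinv (subCols A Jprev) *ᵥ (b - A *ᵥ xprev)))
    (rk : Fin m → ℝ) (hrk : rk = b - A *ᵥ xk) (hrk0 : Aᵀ *ᵥ rk ≠ 0)
    (Jk : Finset (Fin n)) (hJk : Jk = greedySet A rk θ)
    (xk1 : Fin n → ℝ)
    (hxk1 : xk1 = xk + subId Jk *ᵥ (pinv (subCols A Jk) *ᵥ (b - A *ᵥ xk))) :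
    norm2 (A *ᵥ (xk1 - xstar)) ≤
      (1 - frob2 (subCols A Jk) / sigmaMaxSq (subCols A Jk) *
          (θ * frob2 A / (frob2 A - frob2 (subCols A Jprev)) + (1 - θ)) *
          (sigmaMinSq A / frob2 A)) *
        norm2 (A *ᵥ (xk - xstar)) := by
  have hn : Nonempty (Fin n) := by
    by_contra h
    exact hrk0 (funext fun j => absurd ⟨j⟩ h)
  -- abbreviations
  set F : ℝ := frob2 A with hF_def
  set Fp : ℝ := frob2 (subCols A Jprev) with hFp_def
  set D1 : ℝ := F - Fp with hD1_def
  set N : ℝ := norm2 (Aᵀ *ᵥ rk) with hN_def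
  set R : ℝ := maxRatio A rk with hR_def
  set fB : ℝ := frob2 (subCols A Jk) with hfB_def
  set σM : ℝ := sigmaMaxSq (subCols A Jk) with hσM_def
  set σm : ℝ := sigmaMinSq A with hσm_def
  set g : {j // j ∈ Jk} → ℝ := (subCols A Jk)ᵀ *ᵥ rk with hg_def
  set Q : ℝ := g ⬝ᵥ (((subCols A Jk)ᵀ * subCols A Jk)⁻¹ *ᵥ g) with hQ_def
  set nAe : ℝ := norm2 (A *ᵥ (xk - xstar)) with hnAe_def
  -- basic positivity
  have hN_pos : 0 < N := norm2_pos hrk0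
  have hF_pos : 0 < F := by
    rw [hF_def, frob2_eq_sum_col2]
    exact Finset.sum_pos (fun j _ => col2_pos hA j) Finset.univ_nonempty
  have hD1_pos : 0 < D1 := by
    have hcompl : Jprevᶜ.Nonempty := by
      rw [Finset.nonempty_iff_ne_empty]
      intro h
      exact hproper (by simpa [Finset.compl_eq_empty_iff] using h)
    have : D1 = ∑ j ∈ Jprevᶜ, col2 A j := by
      rw [hD1_def, hF_def, hFp_def, frob2_eq_sum_col2, frob2_subCols,
        ← Finset.sum_add_sum_compl Jprev (col2 A)]
      ring
    rw [this]
    exact Finset.sum_pos (fun j _ => col2_pos hA j) hcompl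
  have hJk_ne : Jk.Nonempty := by
    rw [hJk]; exact greedySet_nonempty hA hrk0 hθ
  have hσM_pos : 0 < σM := sigmaMaxSq_pos hA hJk_ne
  have hσm_nonneg : 0 ≤ σm := sigmaMinSq_nonneg A hn
  have hfB_nonneg : 0 ≤ fB := by
    rw [hfB_def, frob2_subCols]
    exact Finset.sum_nonneg fun j _ => (col2_pos hA j).le
  have hnAe_nonneg : 0 ≤ nAe := norm2_nonneg _
  -- orthogonality from previous step
  have hprev := step_lemma hA b xstar hstar xprev Jprev xk hxk
  have horthv : ∀ j ∈ Jprev, (Aᵀ *ᵥ rk) j = 0 := by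
    intro j hj
    have h1 : (subCols A Jprev)ᵀ *ᵥ rk = 0 := by rw [hrk]; exact hprev.1
    rw [subColsT_mulVec] at h1
    exact congrFun h1 ⟨j, hj⟩
  have h5 : N ≤ R * D1 := by
    have := norm2_ATr_le_of_orth hA rk Jprev horthv
    rw [← hN_def, ← hR_def, ← hF_def, ← hFp_def, ← hD1_def] at this
    exact this
  have hR_pos : 0 < R := by
    by_contra h
    push_neg at h
    nlinarith
  -- energy identity for current step
  have hcur := step_lemma hA b xstar hstar xk Jk xk1 hxk1
  have hE : norm2 (A *ᵥ (xk1 - xstar)) = nAe - Q := by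
    have := hcur.2
    rw [← hrk] at this
    exact this
  -- greedy bound
  have h3 : eps A rk θ * N * fB ≤ norm2 g := by
    have := greedy_sum_bound A rk θ
    rw [← hJk] at this
    exact this
  -- spectral bound
  have h2 : norm2 g ≤ σM * Q := gram_Q_lower hA hJk_ne rk
  -- eps identity
  have h4 : eps A rk θ * N * F = θ * R * F + (1 - θ) * N := by
    rw [eps, ← hN_def, ← hR_def, ← hF_def]
    field_simp
  -- energy lower bound
  have h6 : σm * nAe ≤ N := by
    have hATrk : Aᵀ *ᵥ rk = Aᵀ *ᵥ (A *ᵥ (xstar - xk)) := by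
      rw [hrk]
      have ha : Aᵀ *ᵥ (b - A *ᵥ xk) = Aᵀ *ᵥ b - (Aᵀ * A) *ᵥ xk := by
        rw [Matrix.mulVec_sub, Matrix.mulVec_mulVec]
      have hb2 : Aᵀ *ᵥ (A *ᵥ (xstar - xk)) = (Aᵀ * A) *ᵥ xstar - (Aᵀ * A) *ᵥ xk := by
        rw [Matrix.mulVec_sub, Matrix.mulVec_sub, Matrix.mulVec_mulVec, Matrix.mulVec_mulVec]
      rw [ha, hb2, hstar]
    have hflip : norm2 (A *ᵥ (xstar - xk)) = nAe := by
      have : A *ᵥ (xstar - xk) = -(A *ᵥ (xk - xstar)) := by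
        rw [Matrix.mulVec_sub, Matrix.mulVec_sub]; abel
      rw [this, hnAe_def]
      simp [norm2]
    have := energy_lower A (xstar - xk)
    rw [hflip, ← hATrk, ← hN_def, ← hσm_def] at this
    exact this
  -- main inequality
  have hc : fB / σM * (θ * F / D1 + (1 - θ)) * (σm / F) * nAe ≤ Q := by
    have hK : (0:ℝ) < σM * F * D1 := by positivity
    refine le_of_mul_le_mul_right ?_ hK
    have hcoeff : 0 ≤ fB * (θ * F + (1 - θ) * D1) := by
      apply mul_nonneg hfB_nonneg
      nlinarith [hθ.1, hθ.2]
    calc fB / σM * (θ * F / D1 + (1 - θ)) * (σm / F) * nAe * (σM * F * D1)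
        = fB * (θ * F + (1 - θ) * D1) * (σm * nAe) := by
          field_simp
      _ ≤ fB * (θ * F + (1 - θ) * D1) * N := mul_le_mul_of_nonneg_left h6 hcoeff
      _ = fB * (θ * F * N + (1 - θ) * D1 * N) := by ring
      _ ≤ fB * (θ * F * (R * D1) + (1 - θ) * D1 * N) := by
          apply mul_le_mul_of_nonneg_left ?_ hfB_nonneg
          have : θ * F * N ≤ θ * F * (R * D1) :=
            mul_le_mul_of_nonneg_left h5 (mul_nonneg hθ.1 hF_pos.le)
          linarith
      _ = eps A rk θ * N * fB * (F * D1) := by linear_combination (-(fB * D1)) * h4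
      _ ≤ norm2 g * (F * D1) :=
          mul_le_mul_of_nonneg_right h3 (mul_nonneg hF_pos.le hD1_pos.le)
      _ ≤ σM * Q * (F * D1) :=
          mul_le_mul_of_nonneg_right h2 (mul_nonneg hF_pos.le hD1_pos.le)
      _ = Q * (σM * F * D1) := by ring
  rw [hE]
  nlinarith [hc]
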